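/- arXiv:0801.4076 — 2 statements merged into one kernel-verified Lean document; each statement's English description precedes it below -/
import Mathlib

section
/- In H₃(O), the adjoint satisfies (a^#)^# = (det a)·a, where det a = (1/3)(a^# : a). -/
set_option linter.unusedSectionVars false


open QuadraticMap

variable {k : Type*} [Field k] {O : Type*} [NonAssocRing O] [Module k O]
  [SMulCommClass k O O] [IsScalarTower k O O]

/-- The Cayley conjugate `ã = (a : e)e − a` in a composition algebra. -/
def cconj (n : QuadraticForm k O) (x : O) : O :=
  polar (⇑n) x 1 • (1 : O) - x

/-- An element of `H₃(O)` is encoded by its three diagonal entries `α₁, α₂, α₃ ∈ k`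
together with the three octonion entries `a₁, a₂, a₃ ∈ O`. -/
abbrev H3 (k O : Type*) : Type _ := (Fin 3 → k) × (Fin 3 → O)

/-- The adjoint `a^# = Σᵢ (αⱼαₖ − n(aᵢ)) eᵢ + Σᵢ F̃ᵢ(aⱼaₖ − αᵢãᵢ)`, where `(i,j,k)` runs
over even permutations of `(1,2,3)`. -/
def sharp (n : QuadraticForm k O) (a : H3 k O) : H3 k O :=
  (fun i => a.1 (i + 1) * a.1 (i + 2) - n (a.2 i),
   fun i => cconj n (a.2 (i + 1) * a.2 (i + 2) - a.1 i • cconj n (a.2 i)))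

/-- The Freudenthal product `a × b = (a+b)^# − a^# − b^#`. -/
def fcross (n : QuadraticForm k O) (a b : H3 k O) : H3 k O :=
  sharp n (a + b) - sharp n a - sharp n b

/-- The scalar product `(a : b) = Σᵢ αᵢβᵢ + Σᵢ (aᵢ : bᵢ)` on `H₃(O)`. -/
def sp (n : QuadraticForm k O) (a b : H3 k O) : k :=
  (∑ i, a.1 i * b.1 i) + ∑ i, polar (⇑n) (a.2 i) (b.2 i)

/-- The determinant `det a = (1/3)(a^# : a)`. -/
def det3 (n : QuadraticForm k O) (a : H3 k O) : k :=
  (3 : k)⁻¹ * sp n (sharp n a) a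

namespace Stmt16Aux

variable {k : Type*} [Field k] {O : Type*} [NonAssocRing O] [Module k O]
  [SMulCommClass k O O] [IsScalarTower k O O]
  (n : QuadraticForm k O)

theorem nadd (x y : O) : n (x + y) = n x + n y + polar (⇑n) x y := by
  simp only [QuadraticMap.polar]; ring

variable (hm : ∀ a b : O, n (a * b) = n a * n b)
variable (hnd : ∀ a : O, (∀ b : O, polar (⇑n) a b = 0) → a = 0)
variable (hdim : Module.finrank k O = 8)

include hm in
theorem L2 (a b c : O) : polar (⇑n) (a*c) (b*c) = polar (⇑n) a b * n c := by
  have h := hm (a + b) c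
  rw [add_mul, nadd, nadd, hm, hm] at h
  linear_combination h

include hm in
theorem L1 (a b c : O) : polar (⇑n) (a*b) (a*c) = n a * polar (⇑n) b c := by
  have h := hm a (b + c)
  rw [mul_add, nadd, nadd, hm, hm] at h
  linear_combination h

include hm in
theorem L3 (a b c d : O) :
    polar (⇑n) (a*b) (c*d) + polar (⇑n) (a*d) (c*b) = polar (⇑n) a c * polar (⇑n) b d := by
  have h := L2 n hm a c (b + d)
  rw [mul_add, mul_add, nadd] at h
  rw [QuadraticMap.polar_add_left, QuadraticMap.polar_add_right, QuadraticMap.polar_add_right,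
    L2 n hm a c b, L2 n hm a c d] at h
  linear_combination h

include hm hnd hdim in
theorem N1 : n 1 = 1 := by
  have h := hm 1 1
  rw [one_mul] at h
  by_cases h1 : n 1 = 0
  · exfalso
    have hz : ∀ b : O, n b = 0 := fun b => by
      have := hm 1 b; rw [one_mul, h1, zero_mul] at this; exact this
    have hp : ∀ a b : O, polar (⇑n) a b = 0 := fun a b => by
      have := nadd n a b; rw [hz, hz, hz] at this; linear_combination -this
    have hall : ∀ a : O, a = 0 := fun a => hnd a (hp a)
    have : Subsingleton O := ⟨fun a b => by rw [hall a, hall b]⟩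
    rw [Module.finrank_zero_of_subsingleton] at hdim
    exact absurd hdim (by norm_num)
  · have h' : n 1 * 1 = n 1 * n 1 := by rw [mul_one]; exact h
    exact (mul_left_cancel₀ h1 h').symm

include hm hnd hdim in
theorem T1 : polar (⇑n) 1 (1:O) = 2 := by
  rw [QuadraticMap.polar_self, N1 n hm hnd hdim]
  norm_num

include hm in
theorem R1 (x y z : O) :
    polar (⇑n) (x*y) z + polar (⇑n) (z*y) x = polar (⇑n) x z * polar (⇑n) y 1 := by
  have h := L3 n hm x y z 1
  rw [mul_one, mul_one, QuadraticMap.polar_comm (⇑n) x (z*y)] at h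
  linear_combination h

include hm in
theorem R2 (x y z : O) :
    polar (⇑n) (x*y) z + polar (⇑n) (x*z) y = polar (⇑n) x 1 * polar (⇑n) y z := by
  have h := L3 n hm x y 1 z
  rw [one_mul, one_mul] at h
  linear_combination h

include hm in
theorem Tmul (x y : O) :
    polar (⇑n) (x*y) 1 = polar (⇑n) x 1 * polar (⇑n) y 1 - polar (⇑n) x y := by
  have h := R1 n hm x y 1
  rw [one_mul, QuadraticMap.polar_comm (⇑n) y x] at h
  linear_combination h

theorem conj_add (x y : O) : cconj n (x + y) = cconj n x + cconj n y := by
  simp only [cconj, QuadraticMap.polar_add_left, add_smul]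
  abel

theorem conj_sub (x y : O) : cconj n (x - y) = cconj n x - cconj n y := by
  simp only [cconj, QuadraticMap.polar_sub_left, sub_smul]
  abel

theorem conj_smul (r : k) (x : O) : cconj n (r • x) = r • cconj n x := by
  simp only [cconj, QuadraticMap.polar_smul_left, smul_eq_mul, mul_smul, smul_sub]

include hm hnd hdim in
theorem T_conj (x : O) : polar (⇑n) (cconj n x) 1 = polar (⇑n) x 1 := by
  simp only [cconj, QuadraticMap.polar_sub_left, QuadraticMap.polar_smul_left, smul_eq_mul,
    T1 n hm hnd hdim]
  ring

include hm hnd hdim in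
theorem conj_conj (x : O) : cconj n (cconj n x) = x := by
  conv_lhs => rw [cconj, T_conj n hm hnd hdim, cconj]
  abel

include hm hnd hdim in
theorem conj_one : cconj n (1 : O) = 1 := by
  rw [cconj, T1 n hm hnd hdim]
  have : (2:k) • (1:O) = 1 + 1 := by
    rw [(by norm_num : (2:k) = 1 + 1), add_smul, one_smul]
  rw [this]; abel

theorem P_conj_right (x y : O) :
    polar (⇑n) x (cconj n y) = polar (⇑n) y 1 * polar (⇑n) x 1 - polar (⇑n) x y := by
  simp only [cconj, QuadraticMap.polar_sub_right, QuadraticMap.polar_smul_right, smul_eq_mul]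

theorem P_conj_left (x y : O) :
    polar (⇑n) (cconj n x) y = polar (⇑n) x 1 * polar (⇑n) y 1 - polar (⇑n) x y := by
  simp only [cconj, QuadraticMap.polar_sub_left, QuadraticMap.polar_smul_left, smul_eq_mul]
  rw [QuadraticMap.polar_comm (⇑n) (1:O) y]

theorem nsub (x y : O) : n (x - y) = n x + n y - polar (⇑n) x y := by
  have h := nadd n (x - y) y
  rw [sub_add_cancel] at h
  rw [h, QuadraticMap.polar_sub_left, QuadraticMap.polar_self]
  push_cast [two_smul]
  ring

theorem nsmul' (r : k) (x : O) : n (r • x) = r * r * n x := by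
  rw [QuadraticMap.map_smul, smul_eq_mul]

include hm hnd hdim in
theorem n_conj (x : O) : n (cconj n x) = n x := by
  rw [cconj, nsub, nsmul', N1 n hm hnd hdim, QuadraticMap.polar_smul_left, smul_eq_mul,
    QuadraticMap.polar_comm]
  ring

-- triple reduction lemmas: canonical atom is polar (x*y) z
include hm in
theorem trip1 (x y z : O) : polar (⇑n) (x*z) y
    = polar (⇑n) x 1 * polar (⇑n) y z - polar (⇑n) (x*y) z := by
  linear_combination R2 n hm x y z

include hm in
theorem trip2 (x y z : O) : polar (⇑n) (z*y) x
    = polar (⇑n) y 1 * polar (⇑n) x z - polar (⇑n) (x*y) z := by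
  linear_combination R1 n hm x y z

include hm in
theorem trip3 (x y z : O) : polar (⇑n) (z*x) y
    = polar (⇑n) z 1 * polar (⇑n) x y - polar (⇑n) y 1 * polar (⇑n) x z
      + polar (⇑n) (x*y) z := by
  linear_combination R2 n hm z x y - trip2 n hm x y z

include hm in
theorem trip4 (x y z : O) : polar (⇑n) (y*x) z
    = polar (⇑n) x 1 * polar (⇑n) y z - polar (⇑n) z 1 * polar (⇑n) x y
      + polar (⇑n) y 1 * polar (⇑n) x z - polar (⇑n) (x*y) z := by
  linear_combination R1 n hm y x z - trip3 n hm x y z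

include hm in
theorem trip5 (x y z : O) : polar (⇑n) (y*z) x
    = polar (⇑n) z 1 * polar (⇑n) x y - polar (⇑n) x 1 * polar (⇑n) y z
      + polar (⇑n) (x*y) z := by
  linear_combination R1 n hm x z y - trip1 n hm x y z

include hnd in
theorem pairing (u v : O) (h : ∀ w : O, polar (⇑n) u w = polar (⇑n) v w) : u = v := by
  have h0 := hnd (u - v) (fun w => by
    rw [QuadraticMap.polar_sub_left, h w, sub_self])
  have := sub_eq_zero.mp h0
  exact this

include hm hnd in
theorem CH (x : O) : x * x = polar (⇑n) x 1 • x - n x • (1:O) := by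
  apply pairing n hnd; intro w
  rw [QuadraticMap.polar_sub_left, QuadraticMap.polar_smul_left, QuadraticMap.polar_smul_left,
    smul_eq_mul, smul_eq_mul]
  have h1 := R2 n hm x x w
  have h2 := L1 n hm x w 1
  rw [mul_one] at h2
  linear_combination h1 - h2 + n x * QuadraticMap.polar_comm (⇑n) 1 w

include hm hnd in
theorem Lalt (x z : O) : x * (x * z) = polar (⇑n) x 1 • (x * z) - n x • z := by
  apply pairing n hnd; intro w
  rw [QuadraticMap.polar_sub_left, QuadraticMap.polar_smul_left, QuadraticMap.polar_smul_left,
    smul_eq_mul, smul_eq_mul]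
  have h1 := R2 n hm x (x*z) w
  have h2 := L1 n hm x w z
  linear_combination h1 - h2 + n x * QuadraticMap.polar_comm (⇑n) z w

include hm hnd in
theorem Ralt (x z : O) : (z * x) * x = polar (⇑n) x 1 • (z * x) - n x • z := by
  apply pairing n hnd; intro w
  rw [QuadraticMap.polar_sub_left, QuadraticMap.polar_smul_left, QuadraticMap.polar_smul_left,
    smul_eq_mul, smul_eq_mul]
  have h1 := R1 n hm (z*x) x w
  have h2 := L2 n hm w z x
  linear_combination h1 - h2 + n x * QuadraticMap.polar_comm (⇑n) z w

include hm hnd in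
theorem K1a (x z : O) : cconj n x * (x * z) = n x • z := by
  rw [cconj, sub_mul, smul_mul_assoc, one_mul, Lalt n hm hnd x z]
  module

include hm hnd in
theorem K1c (x z : O) : (z * x) * cconj n x = n x • z := by
  rw [cconj, mul_sub, mul_smul_comm, mul_one, Ralt n hm hnd x z]
  module

include hm hnd in
theorem K1b (x z : O) : x * (cconj n x * z) = n x • z := by
  rw [cconj, sub_mul, smul_mul_assoc, one_mul, mul_sub, mul_smul_comm, Lalt n hm hnd x z]
  module

include hm hnd in
theorem K1d (x z : O) : (z * cconj n x) * x = n x • z := by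
  rw [cconj, mul_sub, mul_smul_comm, mul_one, sub_mul, smul_mul_assoc, Ralt n hm hnd x z]
  module

include hm hnd in
theorem flex' (x z : O) :
    x * (z * x) = polar (⇑n) (x*z) 1 • x - n x • cconj n z := by
  apply pairing n hnd; intro w
  rw [QuadraticMap.polar_sub_left, QuadraticMap.polar_smul_left, QuadraticMap.polar_smul_left,
    smul_eq_mul, smul_eq_mul, P_conj_left]
  have h1 := R2 n hm x (z*x) w
  have h2 := L3 n hm x w z x
  have h3 : polar (⇑n) (x*x) (z*w) = polar (⇑n) x 1 * polar (⇑n) x (z*w)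
      - n x * polar (⇑n) 1 (z*w) := by
    rw [CH n hm hnd x, QuadraticMap.polar_sub_left, QuadraticMap.polar_smul_left,
      QuadraticMap.polar_smul_left, smul_eq_mul, smul_eq_mul]
  have h4 := R2 n hm z x w
  have h5 := Tmul n hm z w
  have h6 := Tmul n hm x z
  linear_combination h1 - h2 + h3 + polar (⇑n) x 1 * QuadraticMap.polar_comm (⇑n) x (z*w)
    + polar (⇑n) x 1 * h4 - n x * QuadraticMap.polar_comm (⇑n) 1 (z*w) - n x * h5
    - polar (⇑n) x w * h6 - polar (⇑n) x z * QuadraticMap.polar_comm (⇑n) w x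

include hm hnd in
theorem conj_mul (x y : O) : cconj n (x*y) = cconj n y * cconj n x := by
  apply pairing n hnd; intro w
  rw [P_conj_left]
  conv_rhs => rw [cconj, cconj]
  simp only [sub_mul, mul_sub, smul_mul_assoc, mul_smul_comm, one_mul, mul_one, smul_smul,
    QuadraticMap.polar_sub_left, QuadraticMap.polar_smul_left, smul_eq_mul]
  have h1 := trip4 n hm x y w
  have h2 := Tmul n hm x y
  linear_combination polar (⇑n) w 1 * h2
    - polar (⇑n) x 1 * polar (⇑n) y 1 * QuadraticMap.polar_comm (⇑n) 1 w - h1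

include hm hnd in
theorem EM (x y z : O) :
    (x*y)*(z*x) = polar (⇑n) ((y*z)*x) 1 • x - n x • cconj n (y*z) := by
  apply pairing n hnd; intro w
  rw [QuadraticMap.polar_sub_left, QuadraticMap.polar_smul_left, QuadraticMap.polar_smul_left,
    smul_eq_mul, smul_eq_mul, P_conj_left]
  have h1 := L3 n hm (x*y) (z*x) w 1
  rw [mul_one, mul_one] at h1
  have h2 := L3 n hm x y w (z*x)
  have h3 : polar (⇑n) (x*(z*x)) (w*y) = polar (⇑n) (x*z) 1 * polar (⇑n) x (w*y)
      - n x * polar (⇑n) (cconj n z) (w*y) := by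
    rw [flex' n hm hnd x z, QuadraticMap.polar_sub_left, QuadraticMap.polar_smul_left,
      QuadraticMap.polar_smul_left, smul_eq_mul, smul_eq_mul]
  have e1 := Tmul n hm z x
  have e2 := QuadraticMap.polar_comm (⇑n) y (z*x)
  have e3 := trip3 n hm x y z
  have e4 := QuadraticMap.polar_comm (⇑n) x (w*y)
  have e5 := trip2 n hm x y w
  have e6 := P_conj_left n z (w*y)
  have e7 := Tmul n hm w y
  have e8 := QuadraticMap.polar_comm (⇑n) z (w*y)
  have e9 : polar (⇑n) (w*y) z = polar (⇑n) y 1 * polar (⇑n) z w - polar (⇑n) (z*y) w :=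
    trip2 n hm z y w
  have e10 : polar (⇑n) (z*y) w = polar (⇑n) y 1 * polar (⇑n) z w
      - polar (⇑n) w 1 * polar (⇑n) y z + polar (⇑n) z 1 * polar (⇑n) y w
      - polar (⇑n) (y*z) w := trip4 n hm y z w
  have e11 := Tmul n hm (y*z) x
  have e12 := trip5 n hm x y z
  have e13 := Tmul n hm y z
  have e14 := Tmul n hm x z
  linear_combination h1 - h2 + h3
    + polar (⇑n) (x*y) w * e1
    - polar (⇑n) x w * e2 - polar (⇑n) x w * e3
    + polar (⇑n) (x*z) 1 * e4 + polar (⇑n) (x*z) 1 * e5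
    - n x * e6 - n x * polar (⇑n) z 1 * e7 + n x * e8 + n x * e9 - n x * e10
    - polar (⇑n) x w * e11 + polar (⇑n) x w * e12
    + (n x * polar (⇑n) w 1 - polar (⇑n) x w * polar (⇑n) x 1) * e13
    + (polar (⇑n) y 1 * polar (⇑n) x w - polar (⇑n) (x*y) w) * e14
    - polar (⇑n) (x*y) w * QuadraticMap.polar_comm (⇑n) z x
    + n x * polar (⇑n) z 1 * QuadraticMap.polar_comm (⇑n) w y

include hm hnd hdim in
theorem spterm (α : k) (a b c : O) :
    polar (⇑n) (cconj n (b*c - α • cconj n a)) a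
      = polar (⇑n) a 1 * polar (⇑n) b 1 * polar (⇑n) c 1
        - polar (⇑n) c 1 * polar (⇑n) a b - polar (⇑n) (a*b) c - 2*α*n a := by
  rw [P_conj_left, QuadraticMap.polar_sub_left, QuadraticMap.polar_sub_left,
    QuadraticMap.polar_smul_left, QuadraticMap.polar_smul_left, smul_eq_mul, smul_eq_mul,
    T_conj n hm hnd hdim, P_conj_left, QuadraticMap.polar_self]
  have e1 := Tmul n hm b c
  have e2 := trip5 n hm a b c
  have e3 := QuadraticMap.polar_comm (⇑n) (b*c) a
  push_cast [two_smul]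
  linear_combination polar (⇑n) a 1 * e1 - e2 - e3 - QuadraticMap.polar_comm (⇑n) a (b*c)

include hm hnd hdim in
theorem diag (α β γ : k) (a b c : O) :
    (γ*α - n b) * (α*β - n c) - n (cconj n (b*c - α • cconj n a))
      = α * (α*β*γ - α * n a - β * n b - γ * n c
        + (polar (⇑n) a 1 * polar (⇑n) b 1 * polar (⇑n) c 1
          - polar (⇑n) c 1 * polar (⇑n) a b - polar (⇑n) (a*b) c)) := by
  rw [n_conj n hm hnd hdim, nsub, nsmul', n_conj n hm hnd hdim, hm,
    QuadraticMap.polar_smul_right, smul_eq_mul, P_conj_right]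
  have e1 := Tmul n hm b c
  have e2 := trip5 n hm a b c
  linear_combination α * polar (⇑n) a 1 * e1 - α * e2

include hm hnd hdim in
theorem key (α β γ : k) (a b c : O) :
    cconj n (cconj n (c*a - β • cconj n b) * cconj n (a*b - γ • cconj n c)
      - (β*γ - n a) • cconj n (cconj n (b*c - α • cconj n a)))
    = (α*β*γ - α * n a - β * n b - γ * n c
        + (polar (⇑n) a 1 * polar (⇑n) b 1 * polar (⇑n) c 1
          - polar (⇑n) c 1 * polar (⇑n) a b - polar (⇑n) (a*b) c)) • a := by
  have cc := conj_conj n hm hnd hdim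
  have h1 : cconj n (cconj n (c*a) * cconj n (a*b)) = (a*b)*(c*a) := by
    rw [← conj_mul n hm hnd (a*b) (c*a), cc]
  have h2 : cconj n (cconj n (c*a) * c) = n c • a := by
    rw [conj_mul n hm hnd, cc]
    exact K1a n hm hnd c a
  have h3 : cconj n (b * cconj n (a*b)) = n b • a := by
    rw [conj_mul n hm hnd, cc]
    exact K1c n hm hnd b a
  rw [cc (b*c - α • cconj n a)]
  simp only [conj_sub n, conj_smul n, cc]
  simp only [sub_mul, mul_sub, smul_mul_assoc, mul_smul_comm, smul_smul]
  simp only [conj_sub n, conj_smul n]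
  rw [h1, h2, h3, EM n hm hnd a b c]
  have hT : polar (⇑n) ((b*c)*a) 1
      = polar (⇑n) a 1 * polar (⇑n) b 1 * polar (⇑n) c 1
        - polar (⇑n) c 1 * polar (⇑n) a b - polar (⇑n) (a*b) c := by
    linear_combination Tmul n hm (b*c) a + polar (⇑n) a 1 * Tmul n hm b c - trip5 n hm a b c
  rw [hT]
  match_scalars <;> ring

include hm hnd hdim in
theorem det3_eq (h3 : (3:k) ≠ 0) (d : Fin 3 → k) (x : Fin 3 → O) :
    det3 n (d, x) = d 0 * d 1 * d 2 - d 0 * n (x 0) - d 1 * n (x 1) - d 2 * n (x 2)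
      + (polar (⇑n) (x 0) 1 * polar (⇑n) (x 1) 1 * polar (⇑n) (x 2) 1
         - polar (⇑n) (x 2) 1 * polar (⇑n) (x 0) (x 1) - polar (⇑n) (x 0 * x 1) (x 2)) := by
  rw [det3, sp]
  simp only [sharp, Fin.sum_univ_three, show (0:Fin 3)+1 = 1 from rfl,
    show (0:Fin 3)+2 = 2 from rfl, show (1:Fin 3)+1 = 2 from rfl, show (1:Fin 3)+2 = 0 from rfl,
    show (2:Fin 3)+1 = 0 from rfl, show (2:Fin 3)+2 = 1 from rfl]
  rw [inv_mul_eq_iff_eq_mul₀ h3]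
  rw [spterm n hm hnd hdim (d 0) (x 0) (x 1) (x 2),
    spterm n hm hnd hdim (d 1) (x 1) (x 2) (x 0),
    spterm n hm hnd hdim (d 2) (x 2) (x 0) (x 1)]
  have e1 := trip5 n hm (x 0) (x 1) (x 2)
  have e2 := trip3 n hm (x 0) (x 1) (x 2)
  have e3 := QuadraticMap.polar_comm (⇑n) (x 2) (x 0)
  have e4 := QuadraticMap.polar_comm (⇑n) (x 1) (x 2)
  have e5 := QuadraticMap.polar_comm (⇑n) (x 0) (x 1)
  linear_combination -e1 - e2 - polar (⇑n) (x 1) 1 * e3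

include hm hnd hdim in
theorem main (h3 : (3:k) ≠ 0) : ∀ a : H3 k O, sharp n (sharp n a) = det3 n a • a := by
  rintro ⟨d, x⟩
  have hdet := det3_eq n hm hnd hdim h3 d x
  refine Prod.ext ?_ ?_ <;> funext i <;> fin_cases i <;>
    simp only [sharp, Prod.smul_fst, Prod.smul_snd, Pi.smul_apply, smul_eq_mul,
      Fin.isValue, Fin.zero_eta, Fin.mk_one, Fin.reduceFinMk, show (0:Fin 3)+1 = 1 from rfl, show (0:Fin 3)+2 = 2 from rfl,
      show (1:Fin 3)+1 = 2 from rfl, show (1:Fin 3)+2 = 0 from rfl,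
      show (2:Fin 3)+1 = 0 from rfl, show (2:Fin 3)+2 = 1 from rfl]
  · linear_combination diag n hm hnd hdim (d 0) (d 1) (d 2) (x 0) (x 1) (x 2) - d 0 * hdet
  · linear_combination diag n hm hnd hdim (d 1) (d 2) (d 0) (x 1) (x 2) (x 0) - d 1 * hdet
      - d 1 * trip5 n hm (x 0) (x 1) (x 2)
  · linear_combination diag n hm hnd hdim (d 2) (d 0) (d 1) (x 2) (x 0) (x 1) - d 2 * hdet
      - d 2 * trip3 n hm (x 0) (x 1) (x 2)
      - d 2 * polar (⇑n) (x 1) 1 * QuadraticMap.polar_comm (⇑n) (x 2) (x 0)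
  · rw [key n hm hnd hdim (d 0) (d 1) (d 2) (x 0) (x 1) (x 2), ← hdet]
  · rw [key n hm hnd hdim (d 1) (d 2) (d 0) (x 1) (x 2) (x 0)]
    have hs : d 1 * d 2 * d 0 - d 1 * n (x 1) - d 2 * n (x 2) - d 0 * n (x 0)
        + (polar (⇑n) (x 1) 1 * polar (⇑n) (x 2) 1 * polar (⇑n) (x 0) 1
          - polar (⇑n) (x 0) 1 * polar (⇑n) (x 1) (x 2) - polar (⇑n) (x 1 * x 2) (x 0))
        = det3 n (d, x) := by
      linear_combination -hdet - trip5 n hm (x 0) (x 1) (x 2)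
    rw [hs]
  · rw [key n hm hnd hdim (d 2) (d 0) (d 1) (x 2) (x 0) (x 1)]
    have hs : d 2 * d 0 * d 1 - d 2 * n (x 2) - d 0 * n (x 0) - d 1 * n (x 1)
        + (polar (⇑n) (x 2) 1 * polar (⇑n) (x 0) 1 * polar (⇑n) (x 1) 1
          - polar (⇑n) (x 1) 1 * polar (⇑n) (x 2) (x 0) - polar (⇑n) (x 2 * x 0) (x 1))
        = det3 n (d, x) := by
      linear_combination -hdet - trip3 n hm (x 0) (x 1) (x 2)
        - polar (⇑n) (x 1) 1 * QuadraticMap.polar_comm (⇑n) (x 2) (x 0)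
    rw [hs]

end Stmt16Aux

open Stmt16Aux in
/-- In `H₃(O)` over a Cayley algebra `O` (an 8-dimensional composition
algebra over `k = ℝ` or `ℂ`), the adjoint satisfies `(a^#)^# = (det a)·a`, where
`det a = (1/3)(a^# : a)`. -/
theorem stmt_16 {k : Type*} [Field k] {O : Type*} [NonAssocRing O] [Module k O]
    [SMulCommClass k O O] [IsScalarTower k O O]
    (h2 : (2 : k) ≠ 0) (h3 : (3 : k) ≠ 0)
    (n : QuadraticForm k O)
    (hnd : ∀ a : O, (∀ b : O, polar (⇑n) a b = 0) → a = 0)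
    (hm : ∀ a b : O, n (a * b) = n a * n b)
    (hdim : Module.finrank k O = 8) :
    ∀ a : H3 k O, sharp n (sharp n a) = det3 n a • a :=
  Stmt16Aux.main n hm hnd hdim h3
end

section
/- In H₃(O) the identity a^# × (a × b) = (det a)·b + (a^# : b)·a holds for all a, b, where × is the Freudenthal product. -/
open QuadraticMap

set_option linter.unusedSectionVars false

variable {k : Type*} [Field k] {O : Type*} [NonAssocRing O] [Module k O]
  [SMulCommClass k O O] [IsScalarTower k O O]

section CA

variable (n : QuadraticForm k O)


theorem cconj_def (x : O) : cconj n x = polar (⇑n) x 1 • (1 : O) - x := rfl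

theorem polar_self' (x : O) : polar (⇑n) x x = 2 * n x := by
  rw [polar_self]; push_cast [nsmul_eq_mul]; ring

theorem cconj_add (x y : O) : cconj n (x + y) = cconj n x + cconj n y := by
  simp only [cconj, polar_add_left, add_smul]; abel

theorem cconj_sub (x y : O) : cconj n (x - y) = cconj n x - cconj n y := by
  simp only [cconj, polar_sub_left, sub_smul]; abel

theorem cconj_smul (c : k) (x : O) : cconj n (c • x) = c • cconj n x := by
  simp only [cconj, polar_smul_left, smul_sub, smul_eq_mul, mul_smul]

section One
variable (h1 : n 1 = 1)
include h1

theorem polar_one_one : polar (⇑n) (1 : O) 1 = 2 := by rw [polar_self' n 1, h1, mul_one]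

theorem cconj_one : cconj n (1 : O) = 1 := by
  rw [cconj, polar_one_one n h1, two_smul]; abel

theorem cconj_tr (x : O) : polar (⇑n) (cconj n x) 1 = polar (⇑n) x 1 := by
  simp only [cconj, polar_sub_left, polar_smul_left, polar_one_one n h1, smul_eq_mul]
  ring

theorem cconj_cconj (x : O) : cconj n (cconj n x) = x := by
  rw [cconj, cconj_tr n h1, cconj, sub_sub_cancel]

theorem polar_cconj_left (x y : O) :
    polar (⇑n) (cconj n x) y = polar (⇑n) x 1 * polar (⇑n) y 1 - polar (⇑n) x y := by
  simp only [cconj, polar_sub_left, polar_smul_left, smul_eq_mul]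
  rw [polar_comm (⇑n) 1 y]

theorem polar_cconj_cconj (x y : O) :
    polar (⇑n) (cconj n x) (cconj n y) = polar (⇑n) x y := by
  rw [polar_comm (⇑n) (cconj n x) (cconj n y), polar_cconj_left n h1, cconj_tr n h1,
    polar_comm (⇑n) y (cconj n x), polar_cconj_left n h1, polar_comm (⇑n) x y]
  ring

theorem polar_cconj_right (x y : O) :
    polar (⇑n) x (cconj n y) = polar (⇑n) x 1 * polar (⇑n) y 1 - polar (⇑n) x y := by
  rw [polar_comm (⇑n) x (cconj n y), polar_cconj_left n h1, polar_comm (⇑n) y x]; ring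

end One

theorem polar_def (x y : O) : polar (⇑n) x y = n (x + y) - n x - n y := rfl

variable (hm : ∀ a b : O, n (a * b) = n a * n b)
include hm

theorem comp_polar_left (a c b : O) :
    polar (⇑n) (a * b) (c * b) = polar (⇑n) a c * n b := by
  simp only [polar_def, ← add_mul, hm]; ring

theorem comp_polar_right (a b d : O) :
    polar (⇑n) (a * b) (a * d) = n a * polar (⇑n) b d := by
  simp only [polar_def, ← mul_add, hm]; ring

theorem comp_polar4 (a b c d : O) :
    polar (⇑n) (a * b) (c * d) + polar (⇑n) (a * d) (c * b)
      = polar (⇑n) a c * polar (⇑n) b d := by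
  have h := comp_polar_left n hm a c (b + d)
  simp only [mul_add, polar_add_left, polar_add_right] at h
  have hb : n (b + d) = polar (⇑n) b d + n b + n d := by rw [polar_def]; ring
  rw [hb] at h
  have h1 := comp_polar_left n hm a c b
  have h2 := comp_polar_left n hm a c d
  linear_combination h - h1 - h2

theorem polar_mul_right_cconj (a b c : O) :
    polar (⇑n) (a * b) c = polar (⇑n) a (c * cconj n b) := by
  have h := comp_polar4 n hm a b c 1
  simp only [mul_one] at h
  simp only [cconj, mul_sub, mul_smul_comm, mul_one, polar_sub_right, polar_smul_right,
    smul_eq_mul]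
  rw [polar_comm (⇑n) b 1] at h ⊢
  linear_combination h

theorem polar_mul_left_cconj (a b c : O) :
    polar (⇑n) (a * b) c = polar (⇑n) b (cconj n a * c) := by
  have h := comp_polar4 n hm a b 1 c
  simp only [one_mul] at h
  simp only [cconj, sub_mul, smul_mul_assoc, one_mul, polar_sub_right, polar_smul_right,
    smul_eq_mul]
  rw [polar_comm (⇑n) (a * c) b] at h
  linear_combination h


section ND

variable (hm : ∀ a b : O, n (a * b) = n a * n b)
variable (hnd : ∀ a : O, (∀ b : O, polar (⇑n) a b = 0) → a = 0)
variable (h1 : n 1 = 1)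
include hm hnd h1

theorem eq_of_polar {u v : O} (h : ∀ d : O, polar (⇑n) u d = polar (⇑n) v d) : u = v := by
  have := hnd (u - v) (fun d => by rw [polar_sub_left, h d, sub_self])
  rwa [sub_eq_zero] at this

theorem conjL (a b : O) : cconj n a * (a * b) = n a • b := by
  refine eq_of_polar n hm hnd h1 (fun d => ?_)
  rw [polar_mul_left_cconj n hm (cconj n a) (a * b) d, cconj_cconj n h1,
    comp_polar_right n hm, polar_smul_left, smul_eq_mul]

theorem conjR (a b : O) : (a * b) * cconj n b = n b • a := by
  refine eq_of_polar n hm hnd h1 (fun d => ?_)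
  rw [polar_mul_right_cconj n hm (a * b) (cconj n b) d, cconj_cconj n h1,
    polar_comm (⇑n) (a * b) (d * b), comp_polar_left n hm, polar_smul_left, smul_eq_mul,
    polar_comm (⇑n) d a]
  ring

theorem conjL' (a c b : O) :
    cconj n a * (c * b) + cconj n c * (a * b) = polar (⇑n) a c • b := by
  refine eq_of_polar n hm hnd h1 (fun d => ?_)
  rw [polar_add_left, polar_mul_left_cconj n hm (cconj n a) (c * b) d, cconj_cconj n h1,
    polar_mul_left_cconj n hm (cconj n c) (a * b) d, cconj_cconj n h1,
    polar_smul_left, smul_eq_mul]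
  have h := comp_polar4 n hm a b c d
  rw [polar_comm (⇑n) (c * b) (a * d), polar_comm (⇑n) (a * b) (c * d)] at *
  linear_combination h

theorem conjR' (a b c : O) :
    (a * b) * cconj n c + (a * c) * cconj n b = polar (⇑n) b c • a := by
  refine eq_of_polar n hm hnd h1 (fun d => ?_)
  rw [polar_add_left, polar_mul_right_cconj n hm (a * b) (cconj n c) d, cconj_cconj n h1,
    polar_mul_right_cconj n hm (a * c) (cconj n b) d, cconj_cconj n h1,
    polar_smul_left, smul_eq_mul]
  have h := comp_polar4 n hm a b d c
  linear_combination h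

theorem cconj_mul (a b : O) : cconj n (a * b) = cconj n b * cconj n a := by
  refine eq_of_polar n hm hnd h1 (fun d => ?_)
  rw [polar_cconj_left n h1, polar_mul_left_cconj n hm (cconj n b) (cconj n a) d,
    cconj_cconj n h1]
  rw [polar_cconj_left n h1 a (b * d)]
  have htr : polar (⇑n) (a * b) 1 = polar (⇑n) a 1 * polar (⇑n) b 1 - polar (⇑n) a b := by
    rw [polar_mul_right_cconj n hm a b 1, one_mul, polar_cconj_right n h1]
  have h4 : polar (⇑n) (a * b) d + polar (⇑n) (a * d) b
      = polar (⇑n) a 1 * polar (⇑n) b d := by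
    have := comp_polar4 n hm a b 1 d
    simp only [one_mul] at this
    rw [polar_comm (⇑n) (a * d) b] at *
    linear_combination this
  have h5 : polar (⇑n) a (b * d) + polar (⇑n) (a * d) b = polar (⇑n) a b * polar (⇑n) d 1 := by
    have := comp_polar4 n hm a d b 1
    simp only [mul_one] at this
    linear_combination this
  have h6 : polar (⇑n) (b * d) 1 = polar (⇑n) b 1 * polar (⇑n) d 1 - polar (⇑n) b d := by
    rw [polar_mul_right_cconj n hm b d 1, one_mul, polar_cconj_right n h1]
  linear_combination htr * polar (⇑n) d 1 - h4 + h5 - polar (⇑n) a 1 * h6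

theorem tr_mul (a b : O) :
    polar (⇑n) (a * b) 1 = polar (⇑n) a 1 * polar (⇑n) b 1 - polar (⇑n) a b := by
  rw [polar_mul_right_cconj n hm a b 1, one_mul, polar_cconj_right n h1]

theorem sq_eq (a : O) : a * a = polar (⇑n) a 1 • a - n a • 1 := by
  have h := conjL n hm hnd h1 a 1
  rw [mul_one, cconj_def] at h
  simp only [sub_mul, smul_mul_assoc, one_mul] at h
  linear_combination (norm := module) -h

theorem lem_pup (p u : O) :
    p * (u * p) = (polar (⇑n) p 1 * polar (⇑n) u 1 - polar (⇑n) u p) • p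
      - n p • cconj n u := by
  have e1 := conjL' n hm hnd h1 p u p
  have e2 := sq_eq n hm hnd h1 p
  have e3 : p * (u * p) = polar (⇑n) p 1 • (u * p) - cconj n p * (u * p) := by
    simp only [cconj_def, sub_mul, smul_mul_assoc, one_mul]; module
  have e4 : cconj n u * (p * p)
      = polar (⇑n) p 1 • (cconj n u * p) - n p • cconj n u := by
    rw [e2]; simp only [mul_sub, mul_smul_comm, mul_one]
  have e5 : u * p + cconj n u * p = polar (⇑n) u 1 • p := by
    simp only [cconj_def, sub_mul, smul_mul_assoc, one_mul]; module
  have ec : polar (⇑n) p u = polar (⇑n) u p := polar_comm _ _ _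
  linear_combination (norm := module) e3 - e1 + e4 + polar (⇑n) p 1 • e5 + (-1 : k) • (ec • p)

theorem lemM (p b c : O) :
    (p * b) * (c * p)
      = ((polar (⇑n) p 1 * polar (⇑n) c 1 - polar (⇑n) c p) * polar (⇑n) b 1
          - polar (⇑n) b (c * p)) • p
        - n p • (cconj n c * cconj n b) := by
  have s1 : (p * b) * (c * p)
      = polar (⇑n) (c * p) 1 • (p * b) - (p * b) * cconj n (c * p) := by
    rw [cconj_def]; simp only [mul_sub, mul_smul_comm, mul_one]; module
  have f2 : cconj n (c * p) = cconj n p * cconj n c := cconj_mul n hm hnd h1 c p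
  have f3 := conjR' n hm hnd h1 p b (c * p)
  have f4 := lem_pup n hm hnd h1 p c
  have f5 : (p * (c * p)) * cconj n b
      = (polar (⇑n) p 1 * polar (⇑n) c 1 - polar (⇑n) c p) • (p * cconj n b)
        - n p • (cconj n c * cconj n b) := by
    rw [f4]; simp only [sub_mul, smul_mul_assoc]
  have f6 : p * cconj n b = polar (⇑n) b 1 • p - p * b := by
    rw [cconj_def]; simp only [mul_sub, mul_smul_comm, mul_one]
  have s7 := tr_mul n hm hnd h1 c p
  rw [f2] at s1 f3
  rw [f6] at f5
  linear_combination (norm := module) s1 - f3 + f5 + s7 • (p * b)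

theorem lemM' (p q b c : O) :
    (q * b) * (c * p) + (p * b) * (c * q)
      = ((polar (⇑n) p 1 * polar (⇑n) c 1 - polar (⇑n) c p) * polar (⇑n) b 1
          - polar (⇑n) b (c * p)) • q
        + ((polar (⇑n) q 1 * polar (⇑n) c 1 - polar (⇑n) c q) * polar (⇑n) b 1
          - polar (⇑n) b (c * q)) • p
        - polar (⇑n) p q • (cconj n c * cconj n b) := by
  have hpq := lemM n hm hnd h1 (p + q) b c
  have hp := lemM n hm hnd h1 p b c
  have hq := lemM n hm hnd h1 q b c
  have hn : n (p + q) = polar (⇑n) p q + n p + n q := by rw [polar_def]; ring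
  simp only [add_mul, mul_add, polar_add_left, polar_add_right, hn, add_smul] at hpq
  linear_combination (norm := module) hpq - hp - hq

theorem mul_sym (a b : O) : a * b + b * a
    = polar (⇑n) a 1 • b + polar (⇑n) b 1 • a - polar (⇑n) a b • 1 := by
  have h := conjL' n hm hnd h1 a b 1
  simp only [mul_one, cconj_def, sub_mul, smul_mul_assoc, one_mul] at h
  linear_combination (norm := module) -h

theorem relA (a b c : O) :
    polar (⇑n) c (a * b) = polar (⇑n) a c * polar (⇑n) b 1 - polar (⇑n) a (c * b) := by
  have h := comp_polar4 n hm a b c 1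
  simp only [mul_one, one_mul] at h
  have hc := polar_comm (⇑n) c (a * b)
  linear_combination h + hc

theorem relB (a b c : O) :
    polar (⇑n) c (a * b) = polar (⇑n) a 1 * polar (⇑n) b c - polar (⇑n) b (a * c) := by
  have h := comp_polar4 n hm a b 1 c
  simp only [mul_one, one_mul] at h
  have hc := polar_comm (⇑n) c (a * b)
  have hd := polar_comm (⇑n) b (a * c)
  linear_combination h + hc + hd

theorem relC (a b c : O) :
    polar (⇑n) a (b * c) + polar (⇑n) a (c * b)
      = polar (⇑n) b 1 * polar (⇑n) a c + polar (⇑n) c 1 * polar (⇑n) a b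
        - polar (⇑n) b c * polar (⇑n) a 1 := by
  have h := mul_sym n hm hnd h1 b c
  have h2 : polar (⇑n) a (b * c + c * b)
      = polar (⇑n) a (polar (⇑n) b 1 • c + polar (⇑n) c 1 • b - polar (⇑n) b c • 1) := by
    rw [h]
  simp only [polar_add_right, polar_sub_right, polar_smul_right, smul_eq_mul] at h2
  linear_combination h2

theorem lemTT (u v w : O) :
    polar (⇑n) (cconj n u * cconj n v) w
      = polar (⇑n) v 1 * (polar (⇑n) u 1 * polar (⇑n) w 1 - polar (⇑n) u w)
        - polar (⇑n) v (u * w) := by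
  rw [polar_mul_left_cconj n hm (cconj n u) (cconj n v) w, cconj_cconj n h1,
    polar_cconj_left n h1, tr_mul n hm hnd h1]

theorem cconj_qf (h2 : (2 : k) ≠ 0) (x : O) : n (cconj n x) = n x := by
  have h := polar_cconj_cconj n h1 x x
  rw [polar_self', polar_self'] at h
  exact mul_left_cancel₀ h2 h

theorem compCC (h2 : (2 : k) ≠ 0) (u v w : O) :
    polar (⇑n) (cconj n u * cconj n v) (cconj n w * cconj n v)
      = polar (⇑n) u w * n v := by
  rw [comp_polar_left n hm, polar_cconj_cconj n h1, cconj_qf n hm hnd h1 h2]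

theorem compCC2 (h2 : (2 : k) ≠ 0) (u v w : O) :
    polar (⇑n) (cconj n u * cconj n v) (cconj n u * cconj n w)
      = n u * polar (⇑n) v w := by
  rw [comp_polar_right n hm, polar_cconj_cconj n h1, cconj_qf n hm hnd h1 h2]

end ND

end CA

section Key

variable (n : QuadraticForm k O)

theorem fcross_fst (a b : H3 k O) (i : Fin 3) :
    (fcross n a b).1 i
      = a.1 (i + 1) * b.1 (i + 2) + b.1 (i + 1) * a.1 (i + 2)
        - polar (⇑n) (a.2 i) (b.2 i) := by
  simp only [fcross, sharp, Prod.fst_sub, Pi.sub_apply, Prod.fst_add, Pi.add_apply,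
    Prod.snd_add, polar_def]
  ring

theorem fcross_snd (a b : H3 k O) (i : Fin 3) :
    (fcross n a b).2 i
      = cconj n (a.2 (i + 1) * b.2 (i + 2) + b.2 (i + 1) * a.2 (i + 2)
          - a.1 i • cconj n (b.2 i) - b.1 i • cconj n (a.2 i)) := by
  simp only [fcross, sharp, Prod.snd_sub, Pi.sub_apply, Prod.fst_add, Pi.add_apply,
    Prod.snd_add, cconj_add, cconj_sub, cconj_smul, mul_add, add_mul, add_smul, smul_add]
  abel

end Key

section Key2

variable (n : QuadraticForm k O)
variable (hm : ∀ a b : O, n (a * b) = n a * n b)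
variable (hnd : ∀ a : O, (∀ b : O, polar (⇑n) a b = 0) → a = 0)
variable (h1 : n 1 = 1)
include hm hnd h1

theorem det3_eq (h3 : (3 : k) ≠ 0) (a : H3 k O) :
    det3 n a
      = a.1 0 * a.1 1 * a.1 2 - a.1 0 * n (a.2 0) - a.1 1 * n (a.2 1) - a.1 2 * n (a.2 2)
        + polar (⇑n) (a.2 0) 1 * polar (⇑n) (a.2 1) 1 * polar (⇑n) (a.2 2) 1
        - polar (⇑n) (a.2 1) 1 * polar (⇑n) (a.2 2) (a.2 0)
        - polar (⇑n) (a.2 1) (a.2 2 * a.2 0) := by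
  rw [det3, inv_mul_eq_iff_eq_mul₀ h3, sp]
  simp only [sharp, Fin.sum_univ_three, Fin.isValue, Fin.reduceAdd,
    cconj_sub, cconj_smul, cconj_cconj n h1, cconj_mul n hm hnd h1,
    polar_sub_left, polar_smul_left, lemTT n hm hnd h1, polar_self', smul_eq_mul]
  have u1conv := relB n hm hnd h1 (a.2 2) (a.2 0) (a.2 1)
  have u2conv := relA n hm hnd h1 (a.2 0) (a.2 1) (a.2 2)
  have u3conv := relC n hm hnd h1 (a.2 0) (a.2 1) (a.2 2)
  have comm31 := polar_comm (⇑n) (a.2 2) (a.2 0)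
  linear_combination 2 * u1conv - u2conv - u3conv
    + 2 * polar (⇑n) (a.2 1) 1 * comm31

theorem sp_sharp_eq (a b : H3 k O) :
    sp n (sharp n a) b
      = (a.1 1 * a.1 2 - n (a.2 0)) * b.1 0 + (a.1 2 * a.1 0 - n (a.2 1)) * b.1 1
        + (a.1 0 * a.1 1 - n (a.2 2)) * b.1 2
        + (polar (⇑n) (a.2 1) 1
            * (polar (⇑n) (a.2 2) 1 * polar (⇑n) (b.2 0) 1 - polar (⇑n) (a.2 2) (b.2 0))
          - polar (⇑n) (a.2 1) (a.2 2 * b.2 0)) - a.1 0 * polar (⇑n) (a.2 0) (b.2 0)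
        + (polar (⇑n) (a.2 2) 1
            * (polar (⇑n) (a.2 0) 1 * polar (⇑n) (b.2 1) 1 - polar (⇑n) (a.2 0) (b.2 1))
          - polar (⇑n) (a.2 2) (a.2 0 * b.2 1)) - a.1 1 * polar (⇑n) (a.2 1) (b.2 1)
        + (polar (⇑n) (a.2 0) 1
            * (polar (⇑n) (a.2 1) 1 * polar (⇑n) (b.2 2) 1 - polar (⇑n) (a.2 1) (b.2 2))
          - polar (⇑n) (a.2 0) (a.2 1 * b.2 2)) - a.1 2 * polar (⇑n) (a.2 2) (b.2 2) := by
  rw [sp]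
  simp only [sharp, Fin.sum_univ_three, Fin.isValue, Fin.reduceAdd,
    cconj_sub, cconj_smul, cconj_cconj n h1, cconj_mul n hm hnd h1,
    polar_sub_left, polar_smul_left, lemTT n hm hnd h1, smul_eq_mul]
  ring

theorem lemTT2 (u v w : O) :
    polar (⇑n) w (cconj n u * cconj n v)
      = polar (⇑n) v 1 * (polar (⇑n) u 1 * polar (⇑n) w 1 - polar (⇑n) u w)
        - polar (⇑n) v (u * w) := by
  rw [polar_comm (⇑n) w (cconj n u * cconj n v), lemTT n hm hnd h1]


end Key2

/-- In `H₃(O)` over a Cayley algebra `O` (an 8-dimensional composition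
algebra over `k = ℝ` or `ℂ`), the identity `a^# × (a × b) = (det a)·b + (a^# : b)·a`
holds for all `a, b`, where `×` is the Freudenthal product. -/
theorem stmt_17 {k : Type*} [Field k] {O : Type*} [NonAssocRing O] [Module k O]
    [SMulCommClass k O O] [IsScalarTower k O O]
    (h2 : (2 : k) ≠ 0) (h3 : (3 : k) ≠ 0)
    (n : QuadraticForm k O)
    (hnd : ∀ a : O, (∀ b : O, polar (⇑n) a b = 0) → a = 0)
    (hm : ∀ a b : O, n (a * b) = n a * n b)
    (hdim : Module.finrank k O = 8) :
    ∀ a b : H3 k O,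
      fcross n (sharp n a) (fcross n a b) = det3 n a • b + sp n (sharp n a) b • a := by
  have hnt : Nontrivial O := by
    rcases subsingleton_or_nontrivial O with hs | hs
    · rw [Module.finrank_zero_of_subsingleton] at hdim; exact absurd hdim (by norm_num)
    · exact hs
  have h1 : n 1 = 1 := by
    have h := hm 1 1
    rw [mul_one] at h
    have h0 : n 1 * (n 1 - 1) = 0 := by linear_combination -h
    rcases mul_eq_zero.mp h0 with hz | hz
    · exfalso
      have hx : ∀ z : O, n z = 0 := fun z => by
        have := hm z 1; rw [mul_one, hz, mul_zero] at this; exact this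
      have hp : ∀ u v : O, polar (⇑n) u v = 0 := fun u v => by
        rw [polar_def, hx, hx, hx]; ring
      exact one_ne_zero (hnd 1 (fun b => hp 1 b))
    · linear_combination hz
  intro a b
  obtain ⟨α, x⟩ := a
  obtain ⟨β, y⟩ := b
  refine Prod.ext (funext fun i => ?_) (funext fun i => ?_) <;> fin_cases i
  · -- diag component 0
    simp only [Fin.zero_eta, Fin.isValue, fcross_fst, fcross_snd,
      Prod.fst_add, Prod.smul_fst, Pi.add_apply, Pi.smul_apply, smul_eq_mul,
      Fin.reduceAdd]
    rw [det3_eq n hm hnd h1 h3, sp_sharp_eq n hm hnd h1]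
    simp only [sharp, Fin.isValue, Fin.reduceAdd]
    simp only [cconj_sub, cconj_add, cconj_smul, cconj_cconj n h1, cconj_mul n hm hnd h1,
      polar_add_left, polar_add_right, polar_sub_left, polar_sub_right, polar_smul_left,
      polar_smul_right, smul_eq_mul]
    simp only [compCC n hm hnd h1 h2, compCC2 n hm hnd h1 h2]
    simp only [lemTT n hm hnd h1, lemTT2 n hm hnd h1, polar_self']
    have E1 := relB n hm hnd h1 (x 2) (x 0) (y 1)
    have E2 := relA n hm hnd h1 (x 0) (y 1) (x 2)
    have E3 := relA n hm hnd h1 (y 2) (x 0) (x 1)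
    have E4 := relB n hm hnd h1 (x 1) (y 2) (x 0)
    have c2 := polar_comm (⇑n) (x 2) (x 0)
    have c3 := polar_comm (⇑n) (y 2) (x 1)
    linear_combination α 0 * (E2 - E1 + E4 - E3) - α 0 * polar (⇑n) (y 1) 1 * c2
      - α 0 * polar (⇑n) (x 0) 1 * c3
  · -- diag component 1
    simp only [Fin.mk_one, Fin.reduceFinMk, Fin.isValue, fcross_fst, fcross_snd,
      Prod.fst_add, Prod.smul_fst, Pi.add_apply, Pi.smul_apply, smul_eq_mul,
      Fin.reduceAdd]
    rw [det3_eq n hm hnd h1 h3, sp_sharp_eq n hm hnd h1]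
    simp only [sharp, Fin.isValue, Fin.reduceAdd]
    simp only [cconj_sub, cconj_add, cconj_smul, cconj_cconj n h1, cconj_mul n hm hnd h1,
      polar_add_left, polar_add_right, polar_sub_left, polar_sub_right, polar_smul_left,
      polar_smul_right, smul_eq_mul]
    simp only [compCC n hm hnd h1 h2, compCC2 n hm hnd h1 h2]
    simp only [lemTT n hm hnd h1, lemTT2 n hm hnd h1, polar_self']
    have E1 := relB n hm hnd h1 (x 0) (x 1) (y 2)
    have E2 := relA n hm hnd h1 (x 1) (y 2) (x 0)
    have E3 := relA n hm hnd h1 (y 0) (x 1) (x 2)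
    have E4 := relB n hm hnd h1 (x 2) (y 0) (x 1)
    have c2 := polar_comm (⇑n) (x 0) (x 1)
    have c3 := polar_comm (⇑n) (y 0) (x 2)
    have U1 := relB n hm hnd h1 (x 2) (x 0) (x 1)
    have U2 := relA n hm hnd h1 (x 0) (x 1) (x 2)
    have U3 := relC n hm hnd h1 (x 0) (x 1) (x 2)
    have c4 := polar_comm (⇑n) (x 2) (x 0)
    linear_combination α 1 * (E2 - E1 + E4 - E3) - α 1 * polar (⇑n) (y 2) 1 * c2
      - α 1 * polar (⇑n) (x 1) 1 * c3 + β 1 * (U1 - U2) + β 1 * polar (⇑n) (x 1) 1 * c4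
  · -- diag component 2
    simp only [Fin.mk_one, Fin.reduceFinMk, Fin.isValue, fcross_fst, fcross_snd,
      Prod.fst_add, Prod.smul_fst, Pi.add_apply, Pi.smul_apply, smul_eq_mul,
      Fin.reduceAdd]
    rw [det3_eq n hm hnd h1 h3, sp_sharp_eq n hm hnd h1]
    simp only [sharp, Fin.isValue, Fin.reduceAdd]
    simp only [cconj_sub, cconj_add, cconj_smul, cconj_cconj n h1, cconj_mul n hm hnd h1,
      polar_add_left, polar_add_right, polar_sub_left, polar_sub_right, polar_smul_left,
      polar_smul_right, smul_eq_mul]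
    simp only [compCC n hm hnd h1 h2, compCC2 n hm hnd h1 h2]
    simp only [lemTT n hm hnd h1, lemTT2 n hm hnd h1, polar_self']
    have E1 := relB n hm hnd h1 (x 1) (x 2) (y 0)
    have E2 := relA n hm hnd h1 (x 2) (y 0) (x 1)
    have E3 := relA n hm hnd h1 (y 1) (x 2) (x 0)
    have E4 := relB n hm hnd h1 (x 0) (y 1) (x 2)
    have c2 := polar_comm (⇑n) (x 1) (x 2)
    have c3 := polar_comm (⇑n) (y 1) (x 0)
    have U1 := relB n hm hnd h1 (x 2) (x 0) (x 1)
    have U2 := relA n hm hnd h1 (x 0) (x 1) (x 2)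
    have U3 := relC n hm hnd h1 (x 0) (x 1) (x 2)
    have c4 := polar_comm (⇑n) (x 2) (x 0)
    linear_combination α 2 * (E2 - E1 + E4 - E3) - α 2 * polar (⇑n) (y 0) 1 * c2
      - α 2 * polar (⇑n) (x 2) 1 * c3 + β 2 * (U1 - U3) + β 2 * polar (⇑n) (x 1) 1 * c4
  · -- off-diag component 0
    simp only [Fin.zero_eta, Fin.isValue, fcross_fst, fcross_snd,
      Prod.snd_add, Prod.smul_snd, Pi.add_apply, Pi.smul_apply,
      Fin.reduceAdd]
    rw [det3_eq n hm hnd h1 h3, sp_sharp_eq n hm hnd h1]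
    simp only [sharp, Fin.isValue, Fin.reduceAdd]
    simp only [cconj_sub, cconj_add, cconj_smul, cconj_cconj n h1, cconj_mul n hm hnd h1,
      mul_add, add_mul, mul_sub, sub_mul, smul_mul_assoc, mul_smul_comm,
      polar_add_left, polar_add_right, polar_sub_left, polar_sub_right, polar_smul_left,
      polar_smul_right, smul_eq_mul]
    have H1 := lemM n hm hnd h1 (x 0) (y 1) (x 2)
    have H2 := lemM n hm hnd h1 (x 0) (x 1) (y 2)
    have H3 := lemM' n hm hnd h1 (x 0) (y 0) (x 1) (x 2)
    have H4 := conjL' n hm hnd h1 (y 2) (x 2) (x 0)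
    have H5 := conjL n hm hnd h1 (x 2) (x 0)
    have H6 := conjR' n hm hnd h1 (x 0) (y 1) (x 1)
    have H7 := conjR n hm hnd h1 (y 0) (x 1)
    have H8 := conjL n hm hnd h1 (x 2) (y 0)
    have H9 := conjR n hm hnd h1 (x 0) (x 1)
    have E1 := relB n hm hnd h1 (x 2) (x 0) (y 1)
    have E2 := relA n hm hnd h1 (x 0) (y 1) (x 2)
    have E3 := relA n hm hnd h1 (y 2) (x 0) (x 1)
    have E4 := relB n hm hnd h1 (x 1) (y 2) (x 0)
    have c2 := polar_comm (⇑n) (x 2) (x 0)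
    have c3 := polar_comm (⇑n) (y 2) (x 1)
    linear_combination (norm := module) H1 + H2 + H3 - α 2 • H4 - β 2 • H5 - α 1 • H6
      - α 1 • H7 - α 2 • H8 - β 1 • H9
      + (E2 - E1 + E4 - E3) • x 0
      - (polar (⇑n) (y 1) 1 * c2) • x 0 - (polar (⇑n) (x 0) 1 * c3) • x 0
      + (α 1 * polar_comm (⇑n) (x 1) (y 1) + α 2 * polar_comm (⇑n) (x 2) (y 2)) • x 0
  · -- off-diag component 1
    simp only [Fin.mk_one, Fin.reduceFinMk, Fin.isValue, fcross_fst, fcross_snd,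
      Prod.snd_add, Prod.smul_snd, Pi.add_apply, Pi.smul_apply,
      Fin.reduceAdd]
    rw [det3_eq n hm hnd h1 h3, sp_sharp_eq n hm hnd h1]
    simp only [sharp, Fin.isValue, Fin.reduceAdd]
    simp only [cconj_sub, cconj_add, cconj_smul, cconj_cconj n h1, cconj_mul n hm hnd h1,
      mul_add, add_mul, mul_sub, sub_mul, smul_mul_assoc, mul_smul_comm,
      polar_add_left, polar_add_right, polar_sub_left, polar_sub_right, polar_smul_left,
      polar_smul_right, smul_eq_mul]
    have H1 := lemM n hm hnd h1 (x 1) (y 2) (x 0)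
    have H2 := lemM n hm hnd h1 (x 1) (x 2) (y 0)
    have H3 := lemM' n hm hnd h1 (x 1) (y 1) (x 2) (x 0)
    have H4 := conjL' n hm hnd h1 (y 0) (x 0) (x 1)
    have H5 := conjL n hm hnd h1 (x 0) (x 1)
    have H6 := conjR' n hm hnd h1 (x 1) (y 2) (x 2)
    have H7 := conjR n hm hnd h1 (y 1) (x 2)
    have H8 := conjL n hm hnd h1 (x 0) (y 1)
    have H9 := conjR n hm hnd h1 (x 1) (x 2)
    have E1 := relB n hm hnd h1 (x 0) (x 1) (y 2)
    have E2 := relA n hm hnd h1 (x 1) (y 2) (x 0)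
    have E3 := relA n hm hnd h1 (y 0) (x 1) (x 2)
    have E4 := relB n hm hnd h1 (x 2) (y 0) (x 1)
    have c2 := polar_comm (⇑n) (x 0) (x 1)
    have c3 := polar_comm (⇑n) (y 0) (x 2)
    have U1 := relB n hm hnd h1 (x 2) (x 0) (x 1)
    have U2 := relA n hm hnd h1 (x 0) (x 1) (x 2)
    have U3 := relC n hm hnd h1 (x 0) (x 1) (x 2)
    have c4 := polar_comm (⇑n) (x 2) (x 0)
    linear_combination (norm := module) H1 + H2 + H3 - α 0 • H4 - β 0 • H5
      - α 2 • H6 - α 2 • H7 - α 0 • H8 - β 2 • H9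
      + (E2 - E1 + E4 - E3) • x 1
      - (polar (⇑n) (y 2) 1 * c2) • x 1 - (polar (⇑n) (x 1) 1 * c3) • x 1
      + (α 2 * polar_comm (⇑n) (x 2) (y 2)
          + α 0 * polar_comm (⇑n) (x 0) (y 0)) • x 1
      + (U1 - U2 + polar (⇑n) (x 1) 1 * c4) • y 1
  · -- off-diag component 2
    simp only [Fin.mk_one, Fin.reduceFinMk, Fin.isValue, fcross_fst, fcross_snd,
      Prod.snd_add, Prod.smul_snd, Pi.add_apply, Pi.smul_apply,
      Fin.reduceAdd]
    rw [det3_eq n hm hnd h1 h3, sp_sharp_eq n hm hnd h1]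
    simp only [sharp, Fin.isValue, Fin.reduceAdd]
    simp only [cconj_sub, cconj_add, cconj_smul, cconj_cconj n h1, cconj_mul n hm hnd h1,
      mul_add, add_mul, mul_sub, sub_mul, smul_mul_assoc, mul_smul_comm,
      polar_add_left, polar_add_right, polar_sub_left, polar_sub_right, polar_smul_left,
      polar_smul_right, smul_eq_mul]
    have H1 := lemM n hm hnd h1 (x 2) (y 0) (x 1)
    have H2 := lemM n hm hnd h1 (x 2) (x 0) (y 1)
    have H3 := lemM' n hm hnd h1 (x 2) (y 2) (x 0) (x 1)
    have H4 := conjL' n hm hnd h1 (y 1) (x 1) (x 2)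
    have H5 := conjL n hm hnd h1 (x 1) (x 2)
    have H6 := conjR' n hm hnd h1 (x 2) (y 0) (x 0)
    have H7 := conjR n hm hnd h1 (y 2) (x 0)
    have H8 := conjL n hm hnd h1 (x 1) (y 2)
    have H9 := conjR n hm hnd h1 (x 2) (x 0)
    have E1 := relB n hm hnd h1 (x 1) (x 2) (y 0)
    have E2 := relA n hm hnd h1 (x 2) (y 0) (x 1)
    have E3 := relA n hm hnd h1 (y 1) (x 2) (x 0)
    have E4 := relB n hm hnd h1 (x 0) (y 1) (x 2)
    have c2 := polar_comm (⇑n) (x 1) (x 2)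
    have c3 := polar_comm (⇑n) (y 1) (x 0)
    have U1 := relB n hm hnd h1 (x 2) (x 0) (x 1)
    have U2 := relA n hm hnd h1 (x 0) (x 1) (x 2)
    have U3 := relC n hm hnd h1 (x 0) (x 1) (x 2)
    have c4 := polar_comm (⇑n) (x 2) (x 0)
    linear_combination (norm := module) H1 + H2 + H3 - α 1 • H4 - β 1 • H5
      - α 0 • H6 - α 0 • H7 - α 1 • H8 - β 0 • H9
      + (E2 - E1 + E4 - E3) • x 2
      - (polar (⇑n) (y 0) 1 * c2) • x 2 - (polar (⇑n) (x 2) 1 * c3) • x 2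
      + (α 0 * polar_comm (⇑n) (x 0) (y 0)
          + α 1 * polar_comm (⇑n) (x 1) (y 1)) • x 2
      + (U1 - U3 + polar (⇑n) (x 1) 1 * c4) • y 2
end
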